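/- Let g be the 4-dimensional solvable real Lie algebra with basis e_1,…,e_4 and nonzero brackets [e_2,e_3] = −e_3 and [e_2,e_4] = e_4, and for t ∈ ℝ let K_t be the endomorphism equal to +id on g⁺_t := span(e_2, e_3) and −id on g⁻_t := span(e_1, e_4 + t e_2). Then: (i) for every t ∈ ℝ, g = g⁺_t ⊕ g⁻_t is a linear D-complex structure; (ii) the 2-form ω := e^1∧e^2 + e^3∧e^4 is d-closed, nondegenerate and K_0-anti-invariant (a linear D-Kähler structure for K_0); (iii) for every t ≠ 0, every d-closed K_t-anti-invariant 2-form η ∈ Λ^2 g* satisfies η∧η = 0; in particular, for t ≠ 0 there exists no d-closed nondegenerate K_t-anti-invariant 2-form. Hence the property of admitting a linear D-Kähler structure is not stable under small deformations of the D-complex structure. -/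

import Mathlib

open scoped BigOperators

noncomputable section ChevalleyEilenberg

variable (g : Type*) [LieRing g] [LieAlgebra ℝ g]

/-- The Chevalley–Eilenberg differential of an alternating `k`-form on a real Lie
algebra, as a function on `(k+1)`-tuples:
`(dα)(x_0,…,x_k) = Σ_{i<j} (−1)^{i+j} α([x_i,x_j], x_0,…,x̂_i,…,x̂_j,…,x_k)`. -/
def ceD : {k : ℕ} → AlternatingMap ℝ g ℝ (Fin k) → ((Fin (k + 1) → g) → ℝ)
  | 0, _ => 0
  | (k + 1), α => fun x =>
      ∑ i : Fin (k + 2), ∑ j : Fin (k + 2),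
        if hij : (i : ℕ) < (j : ℕ) then
          (-1 : ℝ) ^ ((i : ℕ) + (j : ℕ)) *
            α (fun m : Fin (k + 1) =>
                if hm : (m : ℕ) = 0 then ⁅x i, x j⁆
                else
                  x (j.succAbove
                      ((⟨(i : ℕ), by omega⟩ : Fin (k + 1)).succAbove
                        (⟨(m : ℕ) - 1, by omega⟩ : Fin k))))
        else 0

theorem ceD_zero {k : ℕ} : ceD g (0 : AlternatingMap ℝ g ℝ (Fin k)) = 0 := by
  cases k with
  | zero => rfl
  | succ k => funext x; simp [ceD]

theorem ceD_add {k : ℕ} (α β : AlternatingMap ℝ g ℝ (Fin k)) :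
    ceD g (α + β) = ceD g α + ceD g β := by
  cases k with
  | zero => funext x; simp [ceD]
  | succ k =>
    funext x
    simp only [ceD, Pi.add_apply, AlternatingMap.add_apply]
    rw [← Finset.sum_add_distrib]
    refine Finset.sum_congr rfl fun i _ => ?_
    rw [← Finset.sum_add_distrib]
    refine Finset.sum_congr rfl fun j _ => ?_
    split
    · ring
    · ring

theorem ceD_smul {k : ℕ} (c : ℝ) (α : AlternatingMap ℝ g ℝ (Fin k)) :
    ceD g (c • α) = c • ceD g α := by
  cases k with
  | zero => funext x; simp [ceD]
  | succ k =>
    funext x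
    simp only [ceD, Pi.smul_apply, AlternatingMap.smul_apply, smul_eq_mul,
      Finset.mul_sum]
    refine Finset.sum_congr rfl fun i _ => ?_
    refine Finset.sum_congr rfl fun j _ => ?_
    split
    · ring
    · ring

/-- The space of `d`-closed `k`-forms. -/
def Zsub (k : ℕ) : Submodule ℝ (AlternatingMap ℝ g ℝ (Fin k)) where
  carrier := {α | ceD g α = 0}
  add_mem' := by
    intro a b ha hb
    simp only [Set.mem_setOf_eq] at *
    rw [ceD_add, ha, hb, add_zero]
  zero_mem' := by
    simpa only [Set.mem_setOf_eq] using ceD_zero g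
  smul_mem' := by
    intro c a ha
    simp only [Set.mem_setOf_eq] at *
    rw [ceD_smul, ha, smul_zero]

/-- The space of `d`-exact `k`-forms. -/
def Bsub : (k : ℕ) → Submodule ℝ (AlternatingMap ℝ g ℝ (Fin k))
  | 0 => ⊥
  | (k + 1) =>
    { carrier := {α | ∃ β : AlternatingMap ℝ g ℝ (Fin k), ceD g β = ⇑α}
      add_mem' := by
        rintro a b ⟨βa, hβa⟩ ⟨βb, hβb⟩
        exact ⟨βa + βb, by rw [ceD_add, hβa, hβb]; ext x; simp⟩
      zero_mem' := ⟨0, by rw [ceD_zero]; ext x; simp⟩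
      smul_mem' := by
        rintro c a ⟨β, hβ⟩
        exact ⟨c • β, by rw [ceD_smul, hβ]; rfl⟩ }

/-- The `k`-th Lie algebra cohomology `H^k(g;ℝ) = ker d / im d`. -/
abbrev Hcoh (k : ℕ) : Type _ :=
  @HasQuotient.Quotient ↥(Zsub g k) _ (@Submodule.hasQuotient ℝ ↥(Zsub g k) _ _ _)
    ((Bsub g k).comap (Zsub g k).subtype)

/-- The cohomology class of a `d`-closed `k`-form. -/
def cls {k : ℕ} (α : AlternatingMap ℝ g ℝ (Fin k)) (hα : ceD g α = 0) : Hcoh g k :=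
  Submodule.Quotient.mk (⟨α, hα⟩ : Zsub g k)

/-- The subgroup `H^{k+}_K(g;ℝ)` of classes admitting a `d`-closed `K`-invariant
representative.  (The set of such classes is a linear subspace, so taking its span
does not enlarge it.) -/
def Hplus (K : g →ₗ[ℝ] g) (k : ℕ) : Submodule ℝ (Hcoh g k) :=
  Submodule.span ℝ
    {c | ∃ (α : AlternatingMap ℝ g ℝ (Fin k)) (hα : ceD g α = 0),
        α.compLinearMap K = α ∧ c = cls g α hα}

/-- The subgroup `H^{k−}_K(g;ℝ)` of classes admitting a `d`-closed
`K`-anti-invariant representative. -/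
def Hminus (K : g →ₗ[ℝ] g) (k : ℕ) : Submodule ℝ (Hcoh g k) :=
  Submodule.span ℝ
    {c | ∃ (α : AlternatingMap ℝ g ℝ (Fin k)) (hα : ceD g α = 0),
        α.compLinearMap K = -α ∧ c = cls g α hα}

/-- The wedge product of `k` linear functionals, as an alternating `k`-form. -/
def wedge {k : ℕ} (fs : Fin k → (g →ₗ[ℝ] ℝ)) :
    AlternatingMap ℝ g ℝ (Fin k) :=
  MultilinearMap.alternatization
    ((MultilinearMap.mkPiAlgebra ℝ (Fin k) ℝ).compLinearMap fs)

end ChevalleyEilenberg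

noncomputable section

section Solv

variable (g : Type*) [LieRing g] [LieAlgebra ℝ g] (e : Module.Basis (Fin 4) ℝ g)

/-- `g⁺_t = span(e_2, e_3)` (0-indexed: `e 1, e 2`), independent of `t`. -/
def gP : Submodule ℝ g := Submodule.span ℝ {e 1, e 2}

/-- `g⁻_t = span(e_1, e_4 + t e_2)` (0-indexed: `e 0, e 3 + t • e 1`). -/
def gM (t : ℝ) : Submodule ℝ g := Submodule.span ℝ {e 0, e 3 + t • e 1}

/-- `ω = e^1∧e^2 + e^3∧e^4`. -/
def omegaF : AlternatingMap ℝ g ℝ (Fin 2) :=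
  wedge g ![e.coord 0, e.coord 1] + wedge g ![e.coord 2, e.coord 3]


section MyAuxGeneric

variable {g : Type*} [LieRing g] [LieAlgebra ℝ g]

theorem my_upd0 (a b c : g) : Function.update ![b, c] 0 a = ![a, c] := by
  funext m; fin_cases m <;> simp

theorem my_upd1 (a b c : g) : Function.update ![a, b] 1 c = ![a, c] := by
  funext m; fin_cases m <;> simp

theorem eta_addl (η : AlternatingMap ℝ g ℝ (Fin 2)) (a b c : g) :
    η ![a + b, c] = η ![a, c] + η ![b, c] := by
  have := η.map_update_add ![a, c] 0 a b
  rwa [my_upd0, my_upd0, my_upd0] at this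

theorem eta_smull (η : AlternatingMap ℝ g ℝ (Fin 2)) (r : ℝ) (a c : g) :
    η ![r • a, c] = r * η ![a, c] := by
  have := η.map_update_smul ![a, c] 0 r a
  rwa [my_upd0, my_upd0] at this

theorem eta_addr (η : AlternatingMap ℝ g ℝ (Fin 2)) (a b c : g) :
    η ![a, b + c] = η ![a, b] + η ![a, c] := by
  have := η.map_update_add ![a, b] 1 b c
  rwa [my_upd1, my_upd1, my_upd1] at this

theorem eta_smulr (η : AlternatingMap ℝ g ℝ (Fin 2)) (r : ℝ) (a c : g) :
    η ![a, r • c] = r * η ![a, c] := by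
  have := η.map_update_smul ![a, c] 1 r c
  rwa [my_upd1, my_upd1] at this

theorem eta_swap (η : AlternatingMap ℝ g ℝ (Fin 2)) (a b : g) :
    η ![a, b] = -η ![b, a] := by
  have h := η.map_swap ![b, a] (show (0 : Fin 2) ≠ 1 by decide)
  have he : (![b, a] : Fin 2 → g) ∘ Equiv.swap 0 1 = ![a, b] := by
    funext m; fin_cases m <;> simp
  rw [he] at h
  exact h

theorem eta_diag (η : AlternatingMap ℝ g ℝ (Fin 2)) (a : g) :
    η ![a, a] = 0 :=
  η.map_eq_zero_of_eq ![a, a] (by simp) (show (0 : Fin 2) ≠ 1 by decide)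

theorem eta_zerol (η : AlternatingMap ℝ g ℝ (Fin 2)) (c : g) :
    η ![(0 : g), c] = 0 := by
  have := eta_smull η 0 0 c; simpa using this

theorem eta_zeror (η : AlternatingMap ℝ g ℝ (Fin 2)) (c : g) :
    η ![c, (0 : g)] = 0 := by
  have := eta_smulr η 0 c 0; simpa using this

theorem eta_negl (η : AlternatingMap ℝ g ℝ (Fin 2)) (a c : g) :
    η ![-a, c] = -η ![a, c] := by
  have := eta_smull η (-1) a c; simpa using this

theorem eta_negr (η : AlternatingMap ℝ g ℝ (Fin 2)) (a c : g) :
    η ![a, -c] = -η ![a, c] := by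
  have := eta_smulr η (-1) a c; simpa using this

theorem bilin_zero (e : Module.Basis (Fin 4) ℝ g) (f : g → g → ℝ)
    (adl : ∀ a b c, f (a + b) c = f a c + f b c)
    (sml : ∀ (r : ℝ) a c, f (r • a) c = r * f a c)
    (adr : ∀ a b c, f a (b + c) = f a b + f a c)
    (smr : ∀ (r : ℝ) a c, f a (r • c) = r * f a c)
    (h0 : ∀ i j : Fin 4, f (e i) (e j) = 0) : ∀ x y, f x y = 0 := by
  let F : g →ₗ[ℝ] g →ₗ[ℝ] ℝ :=
    LinearMap.mk₂ ℝ f adl (fun r a c => by simpa using sml r a c)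
      adr (fun r a c => by simpa using smr r a c)
  have hF : F = 0 := e.ext fun i => e.ext fun j => by simpa [F] using h0 i j
  intro x y
  have h1 := congrFun (congrArg (fun (L : g →ₗ[ℝ] g →ₗ[ℝ] ℝ) => fun a b => L a b) hF) x
  simpa [F] using congrFun h1 y

theorem trilin_zero (e : Module.Basis (Fin 4) ℝ g) (f : g → g → g → ℝ)
    (ad1 : ∀ a b c d, f (a + b) c d = f a c d + f b c d)
    (sm1 : ∀ (r : ℝ) a c d, f (r • a) c d = r * f a c d)
    (ad2 : ∀ a b c d, f a (b + c) d = f a b d + f a c d)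
    (sm2 : ∀ (r : ℝ) a c d, f a (r • c) d = r * f a c d)
    (ad3 : ∀ a b c d, f a b (c + d) = f a b c + f a b d)
    (sm3 : ∀ (r : ℝ) a b c, f a b (r • c) = r * f a b c)
    (h0 : ∀ i j k : Fin 4, f (e i) (e j) (e k) = 0) : ∀ x y z, f x y z = 0 := by
  let L : g → g → (g →ₗ[ℝ] ℝ) := fun a b =>
    { toFun := f a b
      map_add' := ad3 a b
      map_smul' := fun r c => by simpa using sm3 r a b c }
  let F : g →ₗ[ℝ] g →ₗ[ℝ] (g →ₗ[ℝ] ℝ) :=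
    LinearMap.mk₂ ℝ L
      (fun a b c => LinearMap.ext fun d => ad1 a b c d)
      (fun r a c => LinearMap.ext fun d => by simpa [L] using sm1 r a c d)
      (fun a b c => LinearMap.ext fun d => ad2 a b c d)
      (fun r a c => LinearMap.ext fun d => by simpa [L] using sm2 r a c d)
  have hF : F = 0 := e.ext fun i => e.ext fun j => e.ext fun k => by
    simpa [F, L] using h0 i j k
  intro x y z
  have h1 := congrFun (congrArg (fun (M : g →ₗ[ℝ] g →ₗ[ℝ] (g →ₗ[ℝ] ℝ)) => fun a b => M a b) hF) x
  have h2 := congrFun h1 y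
  simpa [F, L] using congrArg (fun (N : g →ₗ[ℝ] ℝ) => N z) h2

end MyAuxGeneric

section MyAuxCeD

variable (g : Type*) [LieRing g] [LieAlgebra ℝ g]

theorem ceD_two (η : AlternatingMap ℝ g ℝ (Fin 2)) (x : Fin 3 → g) :
    ceD g η x = -η ![⁅x 0, x 1⁆, x 2] + η ![⁅x 0, x 2⁆, x 1] - η ![⁅x 1, x 2⁆, x 0] := by
  show (∑ i : Fin 3, ∑ j : Fin 3, _) = _
  rw [Fin.sum_univ_three]
  simp only [Fin.sum_univ_three]
  norm_num
  have h1 : (fun m : Fin 2 => if _ : m = 0 then ⁅x 0, x 1⁆ else x (Fin.succAbove 1 ⟨(m:ℕ)-1+1, by omega⟩)) = ![⁅x 0, x 1⁆, x 2] := by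
    funext m; fin_cases m <;> simp [Fin.succAbove]
  have h2 : (fun m : Fin 2 => if _ : m = 0 then ⁅x 0, x 2⁆ else x (Fin.succAbove 2 ⟨(m:ℕ)-1+1, by omega⟩)) = ![⁅x 0, x 2⁆, x 1] := by
    funext m; fin_cases m <;> simp [Fin.succAbove]
  have h3 : (fun m : Fin 2 => if _ : m = 0 then ⁅x 1, x 2⁆ else x (Fin.succAbove 2 (Fin.succAbove 1 ⟨(m:ℕ)-1, by omega⟩))) = ![⁅x 1, x 2⁆, x 0] := by
    funext m; fin_cases m <;> simp [Fin.succAbove]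
  rw [h1, h2, h3]
  ring

theorem wedge_two (f h : g →ₗ[ℝ] ℝ) (x y : g) :
    wedge g ![f, h] ![x, y] = f x * h y - f y * h x := by
  have hu : (Finset.univ : Finset (Equiv.Perm (Fin 2))) = {1, Equiv.swap 0 1} := by decide
  simp only [wedge, MultilinearMap.alternatization_apply, hu]
  rw [Finset.sum_insert (by decide), Finset.sum_singleton]
  simp [MultilinearMap.compLinearMap_apply, MultilinearMap.mkPiAlgebra_apply,
    MultilinearMap.domDomCongr_apply, Fin.prod_univ_two, Equiv.swap_apply_left,
    Equiv.swap_apply_right]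
  ring

theorem comp2 (η : AlternatingMap ℝ g ℝ (Fin 2)) (K : g →ₗ[ℝ] g) (a b : g) :
    η.compLinearMap K ![a, b] = η ![K a, K b] := by
  rw [AlternatingMap.compLinearMap_apply]
  congr 1
  funext m; fin_cases m <;> simp

end MyAuxCeD


/-- On the 4-dimensional solvable Lie algebra with
`[e_2,e_3] = −e_3`, `[e_2,e_4] = e_4`, the curve `K_t` of linear D-complex
structures (`g⁺_t = span(e_2,e_3)`, `g⁻_t = span(e_1, e_4 + t e_2)`) satisfies:
`ω = e^1∧e^2 + e^3∧e^4` is a linear D-Kähler structure for `K_0`, while for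
`t ≠ 0` every closed `K_t`-anti-invariant 2-form `η` satisfies `η∧η = 0`, so there
is no linear D-Kähler structure for `K_t`: D-Kählerness is not stable under small
deformations of the D-complex structure. -/
theorem DKahler_not_stable_under_deformation
    (hbr : ∀ i j : Fin 4, i < j → ⁅e i, e j⁆ =
      (if i = 1 ∧ j = 2 then -e 2 else if i = 1 ∧ j = 3 then e 3 else 0)) :
    (∀ t : ℝ, IsCompl (gP g e) (gM g e t) ∧
      (∀ x ∈ gP g e, ∀ y ∈ gP g e, ⁅x, y⁆ ∈ gP g e) ∧
      (∀ x ∈ gM g e t, ∀ y ∈ gM g e t, ⁅x, y⁆ ∈ gM g e t)) ∧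
    (∀ K : g →ₗ[ℝ] g, (∀ x ∈ gP g e, K x = x) → (∀ x ∈ gM g e 0, K x = -x) →
      ceD g (omegaF g e) = 0 ∧
      (∀ x : g, (∀ y : g, omegaF g e ![x, y] = 0) → x = 0) ∧
      (omegaF g e).compLinearMap K = -(omegaF g e)) ∧
    (∀ t : ℝ, t ≠ 0 → ∀ K : g →ₗ[ℝ] g,
      (∀ x ∈ gP g e, K x = x) → (∀ x ∈ gM g e t, K x = -x) →
      (∀ η : AlternatingMap ℝ g ℝ (Fin 2),
        ceD g η = 0 → η.compLinearMap K = -η →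
        ∀ x : Fin 4 → g,
          η ![x 0, x 1] * η ![x 2, x 3] - η ![x 0, x 2] * η ![x 1, x 3] +
            η ![x 0, x 3] * η ![x 1, x 2] = 0) ∧
      ¬ ∃ η : AlternatingMap ℝ g ℝ (Fin 2),
          ceD g η = 0 ∧ η.compLinearMap K = -η ∧
          (∀ x : g, (∀ y : g, η ![x, y] = 0) → x = 0)) := by
  classical
  have hfin : ∀ i : Fin 4, i = 0 ∨ i = 1 ∨ i = 2 ∨ i = 3 := by decide
  -- bracket table
  have b01 : ⁅e 0, e 1⁆ = 0 := by simpa using hbr 0 1 (by decide)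
  have b02 : ⁅e 0, e 2⁆ = 0 := by simpa using hbr 0 2 (by decide)
  have b03 : ⁅e 0, e 3⁆ = 0 := by simpa using hbr 0 3 (by decide)
  have b12 : ⁅e 1, e 2⁆ = -e 2 := by simpa using hbr 1 2 (by decide)
  have b13 : ⁅e 1, e 3⁆ = e 3 := by simpa using hbr 1 3 (by decide)
  have b23 : ⁅e 2, e 3⁆ = 0 := by simpa using hbr 2 3 (by decide)
  have b10 : ⁅e 1, e 0⁆ = 0 := by rw [← lie_skew, b01, neg_zero]
  have b20 : ⁅e 2, e 0⁆ = 0 := by rw [← lie_skew, b02, neg_zero]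
  have b30 : ⁅e 3, e 0⁆ = 0 := by rw [← lie_skew, b03, neg_zero]
  have b21 : ⁅e 2, e 1⁆ = e 2 := by rw [← lie_skew, b12, neg_neg]
  have b31 : ⁅e 3, e 1⁆ = -e 3 := by rw [← lie_skew, b13]
  have b32 : ⁅e 3, e 2⁆ = 0 := by rw [← lie_skew, b23, neg_zero]
  have coordval : ∀ i j : Fin 4, e.coord i (e j) = if j = i then 1 else 0 := by
    intro i j
    simp [Module.Basis.coord_apply, Module.Basis.repr_self, Finsupp.single_apply]
  have memP1 : e 1 ∈ gP g e := Submodule.subset_span (Set.mem_insert _ _)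
  have memP2 : e 2 ∈ gP g e :=
    Submodule.subset_span (Set.mem_insert_of_mem _ rfl)
  have memM0 : ∀ t : ℝ, e 0 ∈ gM g e t := fun t =>
    Submodule.subset_span (Set.mem_insert _ _)
  have memM3 : ∀ t : ℝ, e 3 + t • e 1 ∈ gM g e t := fun t =>
    Submodule.subset_span (Set.mem_insert_of_mem _ rfl)
  have ωap : ∀ x y : g, omegaF g e ![x, y] =
      (e.coord 0 x * e.coord 1 y - e.coord 0 y * e.coord 1 x) +
      (e.coord 2 x * e.coord 3 y - e.coord 2 y * e.coord 3 x) := by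
    intro x y
    show wedge g ![e.coord 0, e.coord 1] ![x, y] + wedge g ![e.coord 2, e.coord 3] ![x, y] = _
    rw [wedge_two, wedge_two]
  refine ⟨?_, ?_, ?_⟩
  · -- Part 1
    intro t
    refine ⟨⟨?_, ?_⟩, ?_, ?_⟩
    · -- Disjoint
      rw [Submodule.disjoint_def]
      intro x hxP hxM
      simp only [gP, Submodule.mem_span_pair] at hxP
      simp only [gM, Submodule.mem_span_pair] at hxM
      obtain ⟨a, b, hab⟩ := hxP
      obtain ⟨c, d, hcd⟩ := hxM
      have heq : a • e 1 + b • e 2 = c • e 0 + d • (e 3 + t • e 1) := by rw [hab, hcd]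
      have hco : ∀ i : Fin 4, e.repr (a • e 1 + b • e 2) i
          = e.repr (c • e 0 + d • (e 3 + t • e 1)) i := fun i => by rw [heq]
      have h0 := hco 0
      have h1 := hco 1
      have h2 := hco 2
      have h3 := hco 3
      simp [Module.Basis.repr_self_apply, Finsupp.add_apply, Finsupp.smul_apply] at h0 h1 h2 h3
      rw [← hab]
      have hd : d = 0 := by linarith
      have ha' : a = 0 := by rw [hd] at h1; linarith
      have hb' : b = 0 := h2
      rw [ha', hb']
      simp
    · -- Codisjoint
      rw [codisjoint_iff, eq_top_iff, ← e.span_eq]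
      apply Submodule.span_le.2
      rintro _ ⟨i, rfl⟩
      rcases hfin i with rfl|rfl|rfl|rfl
      · exact Submodule.mem_sup_right (memM0 t)
      · exact Submodule.mem_sup_left memP1
      · exact Submodule.mem_sup_left memP2
      · have h4 : e 3 + t • e 1 ∈ gP g e ⊔ gM g e t := Submodule.mem_sup_right (memM3 t)
        have h5 : e 1 ∈ gP g e ⊔ gM g e t := Submodule.mem_sup_left memP1
        have h6 : e 3 = (e 3 + t • e 1) - t • e 1 := by abel
        rw [h6]
        exact Submodule.sub_mem _ h4 (Submodule.smul_mem _ _ h5)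
    · -- g⁺ subalgebra
      intro x hx y hy
      simp only [gP, Submodule.mem_span_pair] at hx hy
      obtain ⟨a, b, rfl⟩ := hx
      obtain ⟨c, d, rfl⟩ := hy
      have hb : ⁅a • e 1 + b • e 2, c • e 1 + d • e 2⁆ = (b * c - a * d) • e 2 := by
        simp only [lie_add, add_lie, lie_smul, smul_lie, b12, b21, lie_self,
          smul_zero, smul_neg, smul_smul]
        module
      rw [hb]
      exact Submodule.smul_mem _ _ memP2
    · -- g⁻ subalgebra
      intro x hx y hy
      simp only [gM, Submodule.mem_span_pair] at hx hy
      obtain ⟨a, b, rfl⟩ := hx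
      obtain ⟨c, d, rfl⟩ := hy
      have hb : ⁅a • e 0 + b • (e 3 + t • e 1), c • e 0 + d • (e 3 + t • e 1)⁆ = 0 := by
        simp [lie_add, add_lie, lie_smul, smul_lie, lie_self, b01, b03, b10, b30,
          b13, b31, smul_smul]
        module
      rw [hb]
      exact Submodule.zero_mem _
  · -- Part 2
    intro K hKP hKM
    have K1 : K (e 1) = e 1 := hKP _ memP1
    have K2 : K (e 2) = e 2 := hKP _ memP2
    have K0 : K (e 0) = -e 0 := hKM _ (memM0 0)
    have K3 : K (e 3) = -e 3 := by
      have h := hKM _ (memM3 0)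
      simpa using h
    refine ⟨?_, ?_, ?_⟩
    · -- closed
      funext x
      rw [ceD_two, Pi.zero_apply]
      exact trilin_zero e
        (fun a b c => -omegaF g e ![⁅a, b⁆, c] + omegaF g e ![⁅a, c⁆, b]
          - omegaF g e ![⁅b, c⁆, a])
        (fun a b c d => by
          simp only [add_lie, eta_addl, eta_addr]; ring)
        (fun r a c d => by
          simp only [smul_lie, eta_smull, eta_smulr]; ring)
        (fun a b c d => by
          simp only [lie_add, add_lie, eta_addl, eta_addr]; ring)
        (fun r a c d => by
          simp only [lie_smul, smul_lie, eta_smull, eta_smulr]; ring)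
        (fun a b c d => by
          simp only [lie_add, eta_addl, eta_addr]; ring)
        (fun r a b c => by
          simp only [lie_smul, eta_smull, eta_smulr]; ring)
        (by
          have ω0 : ∀ y : g, omegaF g e ![0, y] = 0 := by
            intro y; rw [ωap]; simp
          have ωn : ∀ x y : g, omegaF g e ![-x, y] = -omegaF g e ![x, y] := by
            intro x y; rw [ωap, ωap]; simp; ring
          intro i j k
          rcases hfin i with rfl|rfl|rfl|rfl <;> rcases hfin j with rfl|rfl|rfl|rfl <;>
            rcases hfin k with rfl|rfl|rfl|rfl <;>
            simp only [b01, b02, b03, b12, b13, b23, b10, b20, b30, b21, b31, b32,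
              lie_self, ω0, ωn, ωap, coordval] <;> simp)
        (x 0) (x 1) (x 2)
    · -- nondegenerate
      intro x hx
      have h1 := hx (e 1)
      have h0 := hx (e 0)
      have h3 := hx (e 3)
      have h2 := hx (e 2)
      rw [ωap] at h0 h1 h2 h3
      simp [coordval] at h0 h1 h2 h3
      have hrepr : e.repr x = 0 := by
        ext i
        rcases hfin i with rfl|rfl|rfl|rfl
        · simpa [Module.Basis.coord_apply] using h1
        · simpa [Module.Basis.coord_apply] using h0
        · simpa [Module.Basis.coord_apply] using h3
        · simpa [Module.Basis.coord_apply] using h2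
      exact (Module.Basis.repr e).map_eq_zero_iff.1 hrepr
    · -- anti-invariant
      apply AlternatingMap.ext
      intro v
      have hv : v = ![v 0, v 1] := by funext m; fin_cases m <;> rfl
      rw [hv, comp2, AlternatingMap.neg_apply]
      have key := bilin_zero e
        (fun x y => omegaF g e ![K x, K y] + omegaF g e ![x, y])
        (fun a b c => by simp only [map_add, eta_addl]; ring)
        (fun r a c => by simp only [map_smul, eta_smull]; ring)
        (fun a b c => by simp only [map_add, eta_addr]; ring)
        (fun r a c => by simp only [map_smul, eta_smulr]; ring)
        (by
          intro i j
          rcases hfin i with rfl|rfl|rfl|rfl <;> rcases hfin j with rfl|rfl|rfl|rfl <;>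
            simp only [K0, K1, K2, K3, ωap, map_neg, coordval] <;> simp)
        (v 0) (v 1)
      linarith [key]
  · -- Part 3
    intro t ht K hKP hKM
    have K1 : K (e 1) = e 1 := hKP _ memP1
    have K2 : K (e 2) = e 2 := hKP _ memP2
    have K0 : K (e 0) = -e 0 := hKM _ (memM0 t)
    have K3t : K (e 3 + t • e 1) = -(e 3 + t • e 1) := hKM _ (memM3 t)
    have K3 : K (e 3) = -e 3 - (2 * t) • e 1 := by
      have h : K (e 3) = K (e 3 + t • e 1) - t • K (e 1) := by
        rw [map_add, map_smul]; abel
      rw [h, K3t, K1]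
      module
    have keyη : ∀ η : AlternatingMap ℝ g ℝ (Fin 2), ceD g η = 0 →
        η.compLinearMap K = -η →
        (∀ x y : g, η ![x, y] = η ![x, e 3] * e.coord 3 y - η ![y, e 3] * e.coord 3 x) ∧
          η ![e 0, e 3] = 0 := by
      intro η hc ha
      have c1 : ceD g η ![e 0, e 1, e 2] = 0 := by rw [hc]; rfl
      have c2 : ceD g η ![e 0, e 1, e 3] = 0 := by rw [hc]; rfl
      rw [ceD_two] at c1 c2
      simp only [Matrix.cons_val_zero, Matrix.cons_val_one, Matrix.head_cons,
        Matrix.cons_val_two, Matrix.tail_cons, b01, b02, b03, b12, b13,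
        eta_zerol, eta_negl] at c1 c2
      have η02 : η ![e 0, e 2] = 0 := by
        rw [eta_swap]; linarith
      have η03 : η ![e 0, e 3] = 0 := by
        rw [eta_swap]; linarith
      have a12 : η.compLinearMap K ![e 1, e 2] = -η ![e 1, e 2] := by rw [ha]; rfl
      rw [comp2, K1, K2] at a12
      have η12 : η ![e 1, e 2] = 0 := by linarith
      have a03 : η.compLinearMap K ![e 0, e 3] = -η ![e 0, e 3] := by rw [ha]; rfl
      rw [comp2, K0, K3] at a03
      have hexp : η ![-e 0, -e 3 - (2 * t) • e 1]
          = η ![e 0, e 3] + (2 * t) * η ![e 0, e 1] := by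
        rw [sub_eq_add_neg, ← neg_smul, eta_negl, eta_addr, eta_smulr, eta_negr]
        ring
      rw [hexp, η03] at a03
      have η01 : η ![e 0, e 1] = 0 := by
        have hz : (2 * t) * η ![e 0, e 1] = 0 := by linarith
        rcases mul_eq_zero.1 hz with h | h
        · exact absurd (by linarith : t = 0) ht
        · exact h
      refine ⟨?_, η03⟩
      have η10 : η ![e 1, e 0] = 0 := by rw [eta_swap, η01, neg_zero]
      have η20 : η ![e 2, e 0] = 0 := by rw [eta_swap, η02, neg_zero]
      have η30 : η ![e 3, e 0] = 0 := by rw [eta_swap, η03, neg_zero]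
      have η21 : η ![e 2, e 1] = 0 := by rw [eta_swap, η12, neg_zero]
      have η31 : η ![e 3, e 1] = -η ![e 1, e 3] := eta_swap η _ _
      have η32 : η ![e 3, e 2] = -η ![e 2, e 3] := eta_swap η _ _
      have key := bilin_zero e
        (fun x y => η ![x, y] - (η ![x, e 3] * e.coord 3 y - η ![y, e 3] * e.coord 3 x))
        (fun a b c => by simp only [eta_addl, map_add]; ring)
        (fun r a c => by simp only [eta_smull, map_smul, smul_eq_mul]; ring)
        (fun a b c => by simp only [eta_addr, eta_addl, map_add]; ring)
        (fun r a c => by simp only [eta_smulr, eta_smull, map_smul, smul_eq_mul]; ring)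
        (by
          intro i j
          rcases hfin i with rfl|rfl|rfl|rfl <;> rcases hfin j with rfl|rfl|rfl|rfl <;>
            simp only [coordval, eta_diag, η01, η02, η03, η12, η10, η20, η30,
              η21, η31, η32] <;> simp)
      intro x y
      have hxy : η ![x, y] - (η ![x, e 3] * e.coord 3 y - η ![y, e 3] * e.coord 3 x) = 0 :=
        key x y
      linarith
    constructor
    · intro η hc ha x
      have h := (keyη η hc ha).1
      rw [h (x 0) (x 1), h (x 2) (x 3), h (x 0) (x 2), h (x 1) (x 3),
        h (x 0) (x 3), h (x 1) (x 2)]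
      ring
    · rintro ⟨η, hc, ha, hnd⟩
      obtain ⟨h, h03⟩ := keyη η hc ha
      have h0 : ∀ y, η ![e 0, y] = 0 := by
        intro y
        rw [h (e 0) y, h03, coordval]
        simp
      exact absurd (hnd (e 0) h0) (e.ne_zero 0)


end Solv

end
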